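/- Let f : R^d → R be differentiable, convex, and L-smooth with minimizer x*. For any x, x̃ ∈ R^d and stepsize γ with 0 < γ < 1/(4L), defining x̃' = x̃ − γ∇f(x), one has ‖x̃' − x*‖² ≤ ‖x̃ − x*‖² − (γ/2)(f(x) − f*) + 2Lγ‖x − x̃‖². -/

import Mathlib

section Aux

variable {E : Type*} [NormedAddCommGroup E] [InnerProductSpace ℝ E] [CompleteSpace E]
  (f : E → ℝ) (g : E → E)

lemma line_hasDerivAt (hgrad : ∀ x, HasGradientAt f (g x) x) (x v : E) (t : ℝ) :
    HasDerivAt (fun s : ℝ => f (x + s • v)) (inner ℝ (g (x + t • v)) v : ℝ) t := by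
  have h1 : HasDerivAt (fun s : ℝ => x + s • v) v t := by
    simpa using ((hasDerivAt_id t).smul_const v).const_add x
  have h2 := (hgrad (x + t • v)).hasFDerivAt
  have := h2.comp_hasDerivAt t h1
  exact this

lemma descent_lemma (hgrad : ∀ x, HasGradientAt f (g x) x)
    (L : ℝ) (hL : 0 < L) (hsmooth : ∀ x y, ‖g x - g y‖ ≤ L * ‖x - y‖) (x v : E) :
    f (x + v) ≤ f x + (inner ℝ (g x) v : ℝ) + L / 2 * ‖v‖ ^ 2 := by
  set φ : ℝ → ℝ := fun t => f (x + t • v) - t * (inner ℝ (g x) v : ℝ) - L / 2 * t ^ 2 * ‖v‖ ^ 2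
    with hφ
  have hder : ∀ t : ℝ, HasDerivAt φ
      ((inner ℝ (g (x + t • v)) v : ℝ) - (inner ℝ (g x) v : ℝ) - L * t * ‖v‖ ^ 2) t := by
    intro t
    have h1 := line_hasDerivAt f g hgrad x v t
    have h2 : HasDerivAt (fun s : ℝ => s * (inner ℝ (g x) v : ℝ)) (inner ℝ (g x) v : ℝ) t := by
      simpa using (hasDerivAt_id t).mul_const (inner ℝ (g x) v : ℝ)
    have h3 : HasDerivAt (fun s : ℝ => L / 2 * s ^ 2 * ‖v‖ ^ 2)
        (L * t * ‖v‖ ^ 2) t := by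
      have := ((hasDerivAt_pow 2 t).const_mul (L / 2)).mul_const (‖v‖ ^ 2)
      exact this.congr_deriv (by rw [show (2:ℕ) - 1 = 1 from rfl]; ring)
    exact (h1.sub h2).sub h3
  have hanti : AntitoneOn φ (Set.Icc (0 : ℝ) 1) := by
    apply antitoneOn_of_deriv_nonpos (convex_Icc 0 1)
    · exact fun t _ => ((hder t).continuousAt).continuousWithinAt
    · intro t ht
      exact ((hder t).differentiableAt).differentiableWithinAt
    · intro t ht
      rw [interior_Icc] at ht
      rw [(hder t).deriv]
      have hcs : (inner ℝ (g (x + t • v)) v : ℝ) - (inner ℝ (g x) v : ℝ)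
          ≤ ‖g (x + t • v) - g x‖ * ‖v‖ := by
        rw [← inner_sub_left]
        exact real_inner_le_norm _ _
      have hlip : ‖g (x + t • v) - g x‖ ≤ L * (t * ‖v‖) := by
        have := hsmooth (x + t • v) x
        simpa [norm_smul, abs_of_pos ht.1] using this
      nlinarith [norm_nonneg v, mul_le_mul_of_nonneg_right hlip (norm_nonneg v)]
  have key := hanti (Set.left_mem_Icc.2 zero_le_one) (Set.right_mem_Icc.2 zero_le_one)
    zero_le_one
  simp only [hφ] at key
  simp only [one_smul, zero_smul, add_zero, one_mul, one_pow, zero_pow, mul_zero,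
    zero_mul, sub_zero] at key
  linarith

lemma grad_sq_le (hgrad : ∀ x, HasGradientAt f (g x) x)
    (L : ℝ) (hL : 0 < L) (hsmooth : ∀ x y, ‖g x - g y‖ ≤ L * ‖x - y‖)
    (xstar : E) (hmin : ∀ y, f xstar ≤ f y) (x : E) :
    ‖g x‖ ^ 2 ≤ 2 * L * (f x - f xstar) := by
  have h := descent_lemma f g hgrad L hL hsmooth x (-(L⁻¹ • g x))
  have h1 : (inner ℝ (g x) (-(L⁻¹ • g x)) : ℝ) = -(L⁻¹ * ‖g x‖ ^ 2) := by
    rw [inner_neg_right, real_inner_smul_right, real_inner_self_eq_norm_sq]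
  have h2 : ‖-(L⁻¹ • g x)‖ ^ 2 = L⁻¹ ^ 2 * ‖g x‖ ^ 2 := by
    rw [norm_neg, norm_smul]
    simp [abs_of_pos (inv_pos.2 hL), mul_pow]
  have h3 := hmin (x + -(L⁻¹ • g x))
  rw [h1, h2] at h
  have hLne : L ≠ 0 := ne_of_gt hL
  have : f xstar ≤ f x - ‖g x‖ ^ 2 / (2 * L) := by
    have e : -(L⁻¹ * ‖g x‖ ^ 2) + L / 2 * (L⁻¹ ^ 2 * ‖g x‖ ^ 2)
        = -(‖g x‖ ^ 2 / (2 * L)) := by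
      field_simp
      ring
    calc f xstar ≤ f (x + -(L⁻¹ • g x)) := h3
      _ ≤ f x + (-(L⁻¹ * ‖g x‖ ^ 2) + L / 2 * (L⁻¹ ^ 2 * ‖g x‖ ^ 2)) := by linarith
      _ = f x - ‖g x‖ ^ 2 / (2 * L) := by rw [e]; ring
  have h5 : ‖g x‖ ^ 2 / (2 * L) ≤ f x - f xstar := by linarith
  have := (div_le_iff₀ (by positivity : (0:ℝ) < 2 * L)).mp h5
  linarith

end Aux

/-- One-step inequality in the perturbed iterate analysis: if `f` is differentiable
with gradient `g`, convex, `L`-smooth, with minimizer `xstar`, and `0 < γ < 1/(4L)`,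
then for `x̃' = x̃ − γ • g x`,
`‖x̃' − x*‖² ≤ ‖x̃ − x*‖² − (γ/2)(f x − f*) + 2Lγ‖x − x̃‖²`. -/
theorem perturbed_iterate_step
    (d : ℕ) (f : EuclideanSpace ℝ (Fin d) → ℝ)
    (g : EuclideanSpace ℝ (Fin d) → EuclideanSpace ℝ (Fin d))
    (hgrad : ∀ x, HasGradientAt f (g x) x)
    (hconvex : ∀ x y, f x + (inner ℝ (g x) (y - x) : ℝ) ≤ f y)
    (L : ℝ) (hL : 0 < L)
    (hsmooth : ∀ x y, ‖g x - g y‖ ≤ L * ‖x - y‖)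
    (xstar : EuclideanSpace ℝ (Fin d)) (hmin : ∀ y, f xstar ≤ f y)
    (γ : ℝ) (hγ : 0 < γ) (hγL : γ < 1 / (4 * L))
    (x xt : EuclideanSpace ℝ (Fin d)) :
    ‖(xt - γ • g x) - xstar‖ ^ 2 ≤
      ‖xt - xstar‖ ^ 2 - (γ / 2) * (f x - f xstar) + 2 * L * γ * ‖x - xt‖ ^ 2 := by
  have hexp : ‖(xt - γ • g x) - xstar‖ ^ 2
      = ‖xt - xstar‖ ^ 2 - 2 * γ * (inner ℝ (g x) (xt - xstar) : ℝ)
        + γ ^ 2 * ‖g x‖ ^ 2 := by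
    have : (xt - γ • g x) - xstar = (xt - xstar) - γ • g x := by abel
    rw [this, norm_sub_sq_real, real_inner_smul_right, real_inner_comm, norm_smul]
    simp only [Real.norm_eq_abs, mul_pow, sq_abs]
    ring
  have hsplit : (inner ℝ (g x) (xt - xstar) : ℝ)
      = (inner ℝ (g x) (x - xstar) : ℝ) + (inner ℝ (g x) (xt - x) : ℝ) := by
    rw [← inner_add_right]
    congr 1
    abel
  have hconv : f x - f xstar ≤ (inner ℝ (g x) (x - xstar) : ℝ) := by
    have := hconvex x xstar
    have e : (inner ℝ (g x) (xstar - x) : ℝ) = -(inner ℝ (g x) (x - xstar) : ℝ) := by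
      rw [← inner_neg_right]; congr 1; abel
    rw [e] at this
    linarith
  have hcs : -(‖g x‖ * ‖xt - x‖) ≤ (inner ℝ (g x) (xt - x) : ℝ) := by
    have := real_inner_le_norm (g x) (x - xt)
    have e : (inner ℝ (g x) (x - xt) : ℝ) = -(inner ℝ (g x) (xt - x) : ℝ) := by
      rw [← inner_neg_right]; congr 1; abel
    rw [e] at this
    have : ‖x - xt‖ = ‖xt - x‖ := norm_sub_rev _ _
    linarith [real_inner_le_norm (g x) (x - xt), this ▸ real_inner_le_norm (g x) (x - xt)]
  have hgsq := grad_sq_le f g hgrad L hL hsmooth xstar hmin x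
  have hΔ : 0 ≤ f x - f xstar := by linarith [hmin x]
  have hnorm : ‖x - xt‖ = ‖xt - x‖ := norm_sub_rev _ _
  have h4Lγ : 4 * L * γ < 1 := by
    have := (lt_div_iff₀ (by positivity : (0:ℝ) < 4 * L)).mp hγL
    linarith
  have hub2 : 4 * L * (‖g x‖ * ‖xt - x‖) ≤ ‖g x‖ ^ 2 + 4 * L ^ 2 * ‖xt - x‖ ^ 2 := by
    nlinarith [sq_nonneg (‖g x‖ - 2 * L * ‖xt - x‖)]
  have hc : (0:ℝ) ≤ γ / (2 * L) := by positivity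
  have key1 := mul_le_mul_of_nonneg_left hub2 hc
  have e1 : γ / (2 * L) * (4 * L * (‖g x‖ * ‖xt - x‖)) = 2 * γ * (‖g x‖ * ‖xt - x‖) := by
    field_simp; ring
  have e2 : γ / (2 * L) * (‖g x‖ ^ 2 + 4 * L ^ 2 * ‖xt - x‖ ^ 2)
      = γ / (2 * L) * ‖g x‖ ^ 2 + 2 * L * γ * ‖xt - x‖ ^ 2 := by
    field_simp; ring
  rw [e1, e2] at key1
  have key2 : γ / (2 * L) * ‖g x‖ ^ 2 ≤ γ * (f x - f xstar) := by
    have h := mul_le_mul_of_nonneg_left hgsq hc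
    have e3 : γ / (2 * L) * (2 * L * (f x - f xstar)) = γ * (f x - f xstar) := by
      field_simp
    linarith [e3 ▸ h]
  have key3 : γ ^ 2 * ‖g x‖ ^ 2 ≤ γ / 2 * (f x - f xstar) := by
    have h := mul_le_mul_of_nonneg_left hgsq (le_of_lt (mul_pos hγ hγ))
    have : γ * γ * (2 * L * (f x - f xstar)) ≤ γ / 2 * (f x - f xstar) := by
      nlinarith [mul_nonneg (le_of_lt hγ) hΔ]
    nlinarith
  have hconvγ := mul_le_mul_of_nonneg_left hconv (le_of_lt hγ)
  have hcsγ := mul_le_mul_of_nonneg_left hcs (le_of_lt hγ)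
  rw [hexp, hsplit, hnorm]
  linarith
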